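/- Let G be a just non-Dedekind (JND) group. Then G does not embed into a direct product of Dedekind groups; that is, if {H_i}_{i∈I} is any family of Dedekind groups and φ : G → ∏_{i∈I} H_i is an injective group homomorphism, a contradiction follows (equivalently, any group embedding into a direct product of Dedekind groups and having every proper quotient Dedekind is itself Dedekind). -/

import Mathlib

/-- A group is Dedekind if every subgroup of it is normal. -/
def IsDedekind (G : Type*) [Group G] : Prop := ∀ H : Subgroup G, H.Normal

/-- A group is just non-Dedekind (JND) if it is not Dedekind but every quotient
by a nontrivial normal subgroup is Dedekind. -/
def IsJND (G : Type*) [Group G] : Prop :=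
  ¬ IsDedekind G ∧
    ∀ (N : Subgroup G) (hN : N.Normal), N ≠ ⊥ →
      letI := hN
      IsDedekind (G ⧸ N)

namespace JND


variable {G : Type*} [Group G]

lemma ded_conj (hD : IsDedekind G) (g x : G) : ∃ n : ℤ, g * x * g⁻¹ = x ^ n := by
  have h := (hD (Subgroup.zpowers x)).conj_mem x (Subgroup.mem_zpowers x) g
  obtain ⟨n, hn⟩ := Subgroup.mem_zpowers_iff.mp h
  exact ⟨n, hn.symm⟩

lemma ded_pair (hD : IsDedekind G) (a b : G) :
    ∃ t s : ℤ, a*b*a⁻¹*b⁻¹ = b ^ t ∧ a*b*a⁻¹*b⁻¹ = a ^ s ∧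
      (a*b*a⁻¹*b⁻¹) ^ t = 1 ∧ (a*b*a⁻¹*b⁻¹) ^ s = 1 := by
  obtain ⟨n, hn⟩ := ded_conj hD a b
  obtain ⟨m, hm⟩ := ded_conj hD b a
  set c := a*b*a⁻¹*b⁻¹ with hc
  have hct : c = b ^ (n-1) := by
    rw [zpow_sub, zpow_one, ← hn]
  have hcs : c = a ^ (1-m) := by
    have h1 : c = a * (b*a*b⁻¹)⁻¹ := by rw [hc]; group
    rw [h1, hm, zpow_sub, zpow_one]
  have hfix_a : a * c * a⁻¹ = c := by rw [hcs]; group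
  have hfix_b : b * c * b⁻¹ = c := by rw [hct]; group
  have hcn : a * c * a⁻¹ = c ^ n := by
    rw [hct, ← conj_zpow, hn, ← zpow_mul, mul_comm n (n-1), zpow_mul]
  have hcm : b * c * b⁻¹ = c ^ m := by
    rw [hcs, ← conj_zpow, hm, ← zpow_mul, mul_comm m (1-m), zpow_mul]
  have h1 : c ^ (n-1) = 1 := by
    have : c ^ n = c := by rw [← hcn, hfix_a]
    rw [zpow_sub, zpow_one, this, mul_inv_cancel]
  have h2 : c ^ (1-m) = 1 := by
    have : c ^ m = c := by rw [← hcm, hfix_b]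
    rw [zpow_sub, zpow_one, this, mul_inv_cancel]
  exact ⟨n-1, 1-m, hct, hcs, h1, h2⟩


lemma commute_of_eq_zpow {x y : G} (k : ℤ) (h : x = y ^ k) : Commute x y := by
  rw [h]; exact (Commute.refl y).zpow_left k

lemma conj_pow_left (x y d : G) (h : x * y * x⁻¹ = d * y) (hdx : Commute d x) :
    ∀ k : ℕ, x ^ k * y * (x ^ k)⁻¹ = d ^ k * y := by
  intro k
  induction k with
  | zero => simp
  | succ k ih =>
    have hxd : x * d ^ k = d ^ k * x := ((hdx.pow_left k).symm).eq
    calc x ^ (k+1) * y * (x ^ (k+1))⁻¹ = x * (x ^ k * y * (x ^ k)⁻¹) * x⁻¹ := by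
          rw [pow_succ']; group
      _ = x * (d ^ k * y) * x⁻¹ := by rw [ih]
      _ = d ^ k * (x * y * x⁻¹) := by rw [← mul_assoc, ← mul_assoc, hxd]; group
      _ = d ^ (k+1) * y := by rw [h, pow_succ]; group

/-- From `c = a*b*a⁻¹*b⁻¹` commuting with `a` : `b * a^k = c^(-k) * a^k * b`. -/
lemma b_mul_apow (a b : G) (hca : Commute (a*b*a⁻¹*b⁻¹) a) (k : ℤ) :
    b * a ^ k = (a*b*a⁻¹*b⁻¹) ^ (-k) * a ^ k * b := by
  set c := a*b*a⁻¹*b⁻¹ with hc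
  have h1 : b * a * b⁻¹ = c⁻¹ * a := by rw [hc]; group
  have h2 : b * a ^ k * b⁻¹ = (b * a * b⁻¹) ^ k := by rw [← conj_zpow]
  have h3 : (c⁻¹ * a) ^ k = c ^ (-k) * a ^ k := by
    rw [hca.inv_left.mul_zpow, inv_zpow, ← zpow_neg]
  have := h2.trans (by rw [h1, h3])
  calc b * a ^ k = (b * a ^ k * b⁻¹) * b := by group
    _ = c ^ (-k) * a ^ k * b := by rw [this]

lemma pow_shift (x y C : G) (hCx : Commute C x) (hCy : Commute C y)
    (hrel : y * x = C * x * y) :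
    ∀ N : ℕ, y ^ N * x = C ^ N * x * y ^ N := by
  intro N
  induction N with
  | zero => simp
  | succ N ih =>
    calc y ^ (N+1) * x = y * (y ^ N * x) := by rw [pow_succ']; group
      _ = y * (C ^ N * x * y ^ N) := by rw [ih]
      _ = C ^ N * (y * x) * y ^ N := by
          rw [← mul_assoc, ← mul_assoc, ((hCy.pow_left N).symm).eq]; group
      _ = C ^ N * (C * x * y) * y ^ N := by rw [hrel]
      _ = C ^ (N+1) * x * y ^ (N+1) := by rw [pow_succ, pow_succ']; group

lemma prod_pow (x y C : G) (hCx : Commute C x) (hCy : Commute C y)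
    (hrel : y * x = C * x * y) :
    ∀ N : ℕ, (x * y) ^ N = C ^ (N.choose 2) * x ^ N * y ^ N := by
  intro N
  induction N with
  | zero => simp
  | succ N ih =>
    have hch : (N+1).choose 2 = N.choose 2 + N := by
      rw [Nat.choose_succ_succ, Nat.choose_one_right, Nat.add_comm]
    calc (x * y) ^ (N+1) = (x * y) ^ N * (x * y) := by rw [pow_succ]
      _ = C ^ N.choose 2 * x ^ N * y ^ N * x * y := by rw [ih]; group
      _ = C ^ N.choose 2 * x ^ N * (y ^ N * x) * y := by group
      _ = C ^ N.choose 2 * x ^ N * (C ^ N * x * y ^ N) * y := by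
          rw [pow_shift x y C hCx hCy hrel]
      _ = C ^ N.choose 2 * (x ^ N * C ^ N) * (x * y ^ N) * y := by group
      _ = C ^ N.choose 2 * (C ^ N * x ^ N) * (x * y ^ N) * y := by
          rw [(hCx.pow_pow N N).symm.eq]
      _ = C ^ ((N+1).choose 2) * x ^ (N+1) * y ^ (N+1) := by
          rw [hch, pow_add, pow_succ, pow_succ']
          group

/-- reduce a zpow exponent mod something killed by the element -/
lemma zpow_reduce (x : G) (M : ℤ) (hM : x ^ M = 1) (s : ℤ) : x ^ s = x ^ (s % M) := by
  conv_lhs => rw [← Int.mul_ediv_add_emod s M]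
  rw [zpow_add, zpow_mul, hM, one_zpow, one_mul]

lemma orderOf_zpow_dvd (x : G) (n : ℤ) : orderOf (x ^ n) ∣ orderOf x := by
  apply orderOf_dvd_of_pow_eq_one
  rw [← zpow_natCast, ← zpow_mul, mul_comm, zpow_mul, zpow_natCast, pow_orderOf_eq_one,
    one_zpow]


lemma choose_div {p j B : ℕ} (hp : p.Prime) (hpj : (Odd p ∧ j = 1) ∨ (p = 2 ∧ j = 2))
    (hB : 2*j ≤ B) : p^j ∣ (p^(B-1)).choose 2 := by
  rw [Nat.choose_two_right]
  rcases hpj with ⟨hodd, rfl⟩ | ⟨rfl, rfl⟩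
  · have hnodd : Odd (p^(B-1)) := hodd.pow
    have h2 : 2 ∣ p^(B-1) - 1 := by rcases hnodd with ⟨k, hk⟩; omega
    rw [Nat.mul_div_assoc _ h2, pow_one]
    exact Dvd.dvd.mul_right (dvd_pow_self p (by omega)) _
  · have hsplit : 2^(B-1) = 2 * 2^(B-2) := by
      rw [← pow_succ']; congr 1; omega
    have h1 : 2^(B-1) * (2^(B-1) - 1) / 2 = 2^(B-2) * (2^(B-1)-1) := by
      rw [hsplit, mul_assoc, Nat.mul_div_cancel_left _ (by norm_num)]
    rw [h1]
    exact Dvd.dvd.mul_right (pow_dvd_pow 2 (by omega)) _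

lemma descent (p j : ℕ) (hp : p.Prime) (hpj : (Odd p ∧ j = 1) ∨ (p = 2 ∧ j = 2))
    (hD : IsDedekind G) (a b : G) (A B : ℕ)
    (ha : orderOf a = p ^ A) (hb : orderOf b = p ^ B) (hBA : B ≤ A)
    (hc : orderOf (a * b * a⁻¹ * b⁻¹) = p ^ j) :
    ∃ (w : G) (B' : ℕ), B' < B ∧ orderOf w = p ^ B' ∧
      orderOf (a * w * a⁻¹ * w⁻¹) = p ^ j := by
  obtain ⟨t, s, hct, hcs, hct1, hcs1⟩ := ded_pair hD a b
  set c := a*b*a⁻¹*b⁻¹ with hcdef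
  have hj1 : 1 ≤ j := by rcases hpj with ⟨_,h⟩|⟨_,h⟩ <;> omega
  have hp1 : 1 < p := hp.one_lt
  have hq1 : 1 < p^j := Nat.one_lt_pow (by omega) hp1
  have hc1 : c ≠ 1 := by
    intro h; rw [h, orderOf_one] at hc; omega
  have hcb : Commute c b := commute_of_eq_zpow t hct
  have hca : Commute c a := commute_of_eq_zpow s hcs
  -- j ≤ B
  have hcdvd : orderOf c ∣ orderOf b := by rw [hct]; exact orderOf_zpow_dvd b t
  have hjB : j ≤ B := by
    rw [hc, hb] at hcdvd
    exact (Nat.pow_dvd_pow_iff_le_right hp1).mp hcdvd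
  have hcdvda : orderOf c ∣ orderOf a := by rw [hcs]; exact orderOf_zpow_dvd a s
  have hjA : j ≤ A := by
    rw [hc, ha] at hcdvda
    exact (Nat.pow_dvd_pow_iff_le_right hp1).mp hcdvda
  have hB1 : 1 ≤ B := le_trans hj1 hjB
  -- 2j ≤ B
  have hqt : ((p^j : ℕ) : ℤ) ∣ t := by
    rw [← hc]; exact orderOf_dvd_iff_zpow_eq_one.mpr hct1
  obtain ⟨t₂, ht₂⟩ := hqt
  have h2jB : 2 * j ≤ B := by
    have hcb2 : c = (b ^ ((p^j : ℕ) : ℤ)) ^ t₂ := by rw [← zpow_mul, ← ht₂, hct]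
    have h1 : orderOf c ∣ orderOf (b ^ ((p^j:ℕ):ℤ)) := by
      rw [hcb2]; exact orderOf_zpow_dvd _ t₂
    rw [zpow_natCast] at h1
    have h3 : orderOf (b ^ (p^j:ℕ)) = p^B / Nat.gcd (p^B) (p^j) := by
      rw [← hb]; rw [orderOf_pow' b (by positivity), hb]
    rw [h3, Nat.gcd_eq_right (pow_dvd_pow p hjB), Nat.pow_div hjB (by omega), hc] at h1
    have := (Nat.pow_dvd_pow_iff_le_right hp1).mp h1
    omega
  -- normalize s
  have haMA : a ^ (((p^A : ℕ) : ℤ)) = 1 := by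
    rw [zpow_natCast, ← ha, pow_orderOf_eq_one]
  set s' : ℤ := s % ((p^A : ℕ) : ℤ) with hs'
  have hcs' : c = a ^ s' := by rw [hcs, zpow_reduce a _ haMA s]
  have hs'dvd : ((p^(A-j) : ℕ) : ℤ) ∣ s' := by
    have h1 : c ^ ((p^j : ℕ) : ℤ) = 1 := by
      rw [zpow_natCast, ← hc, pow_orderOf_eq_one]
    have h2 : a ^ (s' * ((p^j:ℕ):ℤ)) = 1 := by rw [zpow_mul, ← hcs', h1]
    have h3 : ((orderOf a : ℕ) : ℤ) ∣ s' * ((p^j:ℕ):ℤ) := orderOf_dvd_iff_zpow_eq_one.mpr h2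
    rw [ha] at h3
    push_cast at h3 ⊢
    have hfac : (p:ℤ)^A = (p:ℤ)^(A-j) * (p:ℤ)^j := by rw [← pow_add]; congr 1; omega
    rw [hfac] at h3
    have hpj0 : ((p:ℤ)^j) ≠ 0 := by positivity
    exact (mul_dvd_mul_iff_right hpj0).mp h3
  obtain ⟨σ, hσ⟩ := hs'dvd
  -- the order-p element S of ⟨c⟩
  set S := c ^ (p^(j-1) : ℕ) with hSdef
  have hS : orderOf S = p := by
    rw [hSdef, orderOf_pow' c (by positivity), hc,
      Nat.gcd_eq_right (pow_dvd_pow p (by omega)), Nat.pow_div (by omega) (by omega)]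
    have hj' : j - (j-1) = 1 := by omega
    rw [hj', pow_one]
  have hSb : S = b ^ (t * ((p^(j-1):ℕ):ℤ)) := by
    rw [hSdef, hct, ← zpow_natCast (b^t), ← zpow_mul]
  have hbMB : b ^ (((p^B : ℕ) : ℤ)) = 1 := by
    rw [zpow_natCast, ← hb, pow_orderOf_eq_one]
  set u : ℤ := (t * ((p^(j-1):ℕ):ℤ)) % ((p^B : ℕ) : ℤ) with hu
  have hSu : S = b ^ u := by rw [hSb, zpow_reduce b _ hbMB]
  have hMBpos : (0:ℤ) < ((p^B : ℕ) : ℤ) := by positivity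
  have hu0 : 0 ≤ u := Int.emod_nonneg _ (by omega)
  have huM : u < ((p^B : ℕ) : ℤ) := Int.emod_lt_of_pos _ hMBpos
  have hSne : S ≠ 1 := by
    intro h; rw [h, orderOf_one] at hS; exact hp.one_lt.ne' hS.symm
  have hune : u ≠ 0 := fun h => hSne (by rw [hSu, h, zpow_zero])
  have hSp : S ^ (p:ℕ) = 1 := by
    rw [hSdef, ← pow_mul, ← pow_succ]
    have : p^(j-1+1) = p^j := by congr 1; omega
    rw [this, ← hc, pow_orderOf_eq_one]
  have hudvd : ((p^(B-1) : ℕ) : ℤ) ∣ u := by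
    have h2 : b ^ (u * ((p:ℕ):ℤ)) = 1 := by
      rw [zpow_mul, ← hSu, zpow_natCast, hSp]
    have h3 : ((orderOf b : ℕ) : ℤ) ∣ u * ((p:ℕ):ℤ) := orderOf_dvd_iff_zpow_eq_one.mpr h2
    rw [hb] at h3
    push_cast at h3 ⊢
    have hfac : (p:ℤ)^B = (p:ℤ)^(B-1) * (p:ℤ) := by
      rw [← pow_succ]; congr 1; omega
    rw [hfac] at h3
    have hpne : ((p:ℤ)) ≠ 0 := by positivity
    exact (mul_dvd_mul_iff_right hpne).mp h3
  obtain ⟨k, hk⟩ := hudvd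
  have hppow_pos : (0:ℤ) < ((p^(B-1):ℕ):ℤ) := by positivity
  have hkpos : 0 < k := by
    rcases lt_trichotomy k 0 with h|h|h
    · exfalso
      have : u < 0 := by rw [hk]; exact mul_neg_of_pos_of_neg hppow_pos h
      omega
    · exfalso; apply hune; rw [hk, h, mul_zero]
    · exact h
  have hkltp : k < (p:ℤ) := by
    have hcast : ((p^B : ℕ) : ℤ) = ((p^(B-1):ℕ):ℤ) * (p:ℤ) := by
      push_cast
      rw [← pow_succ]; congr 1; omega
    rw [hk, hcast] at huM
    exact lt_of_mul_lt_mul_left huM (le_of_lt hppow_pos)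
  -- inverse of k mod p
  have hpk : ¬ ((p:ℤ) ∣ k) := by
    intro hdvd
    have := Int.le_of_dvd hkpos hdvd
    omega
  have hkcop : IsCoprime (k : ℤ) (p : ℤ) := by
    rw [Int.isCoprime_iff_gcd_eq_one]
    have hg1 : ((Int.gcd k (p:ℤ) : ℕ) : ℤ) ∣ (p:ℤ) := Int.gcd_dvd_right k (p:ℤ)
    have hg2 : (Int.gcd k (p:ℤ) : ℕ) ∣ p := by exact_mod_cast hg1
    rcases (Nat.Prime.eq_one_or_self_of_dvd hp _ hg2) with h|h
    · exact h
    · exfalso; apply hpk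
      have := Int.gcd_dvd_left (a := k) (b := (p:ℤ))
      rw [h] at this; exact_mod_cast this
  obtain ⟨z', y', hz'⟩ := hkcop
  -- b ^ (p^(B-1)) = S ^ z'
  have hcastB : ((p^B:ℕ):ℤ) = ((p^(B-1):ℕ):ℤ) * (p:ℤ) := by
    push_cast; rw [← pow_succ]; congr 1; omega
  have hbN : b ^ (((p^(B-1):ℕ)):ℤ) = S ^ z' := by
    have h1 : S ^ z' = b ^ (u * z') := by rw [hSu, ← zpow_mul]
    have hkz : k * z' = 1 - y' * (p:ℤ) := by linear_combination hz'
    have h2 : u * z' = ((p^(B-1):ℕ):ℤ) + ((p^B:ℕ):ℤ) * (-y') := by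
      rw [hk, hcastB]
      linear_combination ((p^(B-1):ℕ):ℤ) * hkz
    rw [h1, h2, zpow_add, zpow_mul, hbMB, one_zpow, mul_one]
  set e : ℤ := (p:ℤ)^(A-B) * σ * z' with he
  set w := a ^ (-e) * b with hw
  have hCx : Commute (c^e) (a^(-e)) := (hca.zpow_left e).zpow_right (-e)
  have hCy : Commute (c^e) b := hcb.zpow_left e
  have hrel : b * a ^ (-e) = c ^ e * a ^ (-e) * b := by
    have h := b_mul_apow a b hca (-e)
    rw [neg_neg] at h
    exact h
  have hpowN := prod_pow (a^(-e)) b (c^e) hCx hCy hrel (p^(B-1))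
  have hterm3 : (c^e) ^ ((p^(B-1)).choose 2) = 1 := by
    have hch := choose_div hp hpj h2jB
    have h1 : c ^ ((p^(B-1)).choose 2) = 1 := by
      apply orderOf_dvd_iff_pow_eq_one.mp
      rw [hc]; exact hch
    calc (c^e) ^ ((p^(B-1)).choose 2)
        = (c ^ (((p^(B-1)).choose 2 : ℕ) : ℤ)) ^ e := by
          rw [← zpow_natCast (c^e), ← zpow_mul, mul_comm, zpow_mul]
      _ = 1 := by rw [zpow_natCast, h1, one_zpow]
  have hterm12 : (a^(-e)) ^ (p^(B-1) : ℕ) * b ^ (p^(B-1) : ℕ) = 1 := by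
    have hbNn : b ^ (p^(B-1) : ℕ) = S ^ z' := by rw [← hbN, zpow_natCast]
    have hSz : S ^ z' = a ^ (s' * ((p^(j-1):ℕ):ℤ) * z') := by
      rw [hSdef, hcs', ← zpow_natCast (a^s'), ← zpow_mul, ← zpow_mul, mul_assoc]
    have haN : (a^(-e)) ^ (p^(B-1):ℕ) = a ^ (-e * ((p^(B-1):ℕ):ℤ)) := by
      rw [← zpow_natCast (a^(-e)), ← zpow_mul]
    rw [hbNn, hSz, haN, ← zpow_add]
    have hexp : -e * ((p^(B-1):ℕ):ℤ) + s' * ((p^(j-1):ℕ):ℤ) * z' = 0 := by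
      rw [he, hσ]
      push_cast
      have h1 : (p:ℤ)^(A-B) * (p:ℤ)^(B-1) = (p:ℤ)^(A-1) := by
        rw [← pow_add]; congr 1; omega
      have h2 : (p:ℤ)^(A-j) * (p:ℤ)^(j-1) = (p:ℤ)^(A-1) := by
        rw [← pow_add]; congr 1; omega
      linear_combination σ * z' * h2 - σ * z' * h1
    rw [hexp, zpow_zero]
  have hwN : w ^ (p^(B-1) : ℕ) = 1 := by
    rw [hw, hpowN, hterm3, one_mul, hterm12]
  have hdvdw : orderOf w ∣ p^(B-1) := orderOf_dvd_of_pow_eq_one hwN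
  obtain ⟨B', hB'le, hB'⟩ := (Nat.dvd_prime_pow hp).mp hdvdw
  have hcw : a * w * a⁻¹ * w⁻¹ = c := by
    have hab : a * b * a⁻¹ = c * b := by rw [hcdef]; group
    have h1 : a * w * a⁻¹ = c * w := by
      rw [hw]
      calc a * (a^(-e) * b) * a⁻¹ = a ^ (-e) * (a * b * a⁻¹) := by group
        _ = a ^ (-e) * (c * b) := by rw [hab]
        _ = c * (a^(-e) * b) := by
            rw [← mul_assoc, ((hca.zpow_right (-e)).symm).eq]; group
    rw [h1]; group
  exact ⟨w, B', by omega, hB', by rw [hcw]; exact hc⟩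


lemma no_config (hD : IsDedekind G) (p j : ℕ) (hp : p.Prime)
    (hpj : (Odd p ∧ j = 1) ∨ (p = 2 ∧ j = 2)) :
    ∀ μ : ℕ, ∀ a b : G, ∀ A B : ℕ, A + B ≤ μ → orderOf a = p ^ A → orderOf b = p ^ B →
      orderOf (a * b * a⁻¹ * b⁻¹) ≠ p ^ j := by
  intro μ
  induction μ with
  | zero =>
    intro a b A B hμ ha hb hc
    have hB0 : B = 0 := by omega
    rw [hB0, pow_zero, orderOf_eq_one_iff] at hb
    rw [hb] at hc
    simp at hc
    have hj1 : 1 ≤ j := by rcases hpj with ⟨_,h⟩|⟨_,h⟩ <;> omega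
    have := Nat.one_lt_pow (n := j) (by omega) hp.one_lt
    omega
  | succ μ ih =>
    intro a b A B hμ ha hb hc
    rcases le_total B A with hBA | hAB
    · obtain ⟨w, B', hB'lt, hw, hcw⟩ := descent p j hp hpj hD a b A B ha hb hBA hc
      exact ih a w A B' (by omega) ha hw hcw
    · have hswap : b * a * b⁻¹ * a⁻¹ = (a * b * a⁻¹ * b⁻¹)⁻¹ := by group
      have hc' : orderOf (b * a * b⁻¹ * a⁻¹) = p ^ j := by rw [hswap, orderOf_inv, hc]
      obtain ⟨w, A', hA'lt, hw, hcw⟩ := descent p j hp hpj hD b a B A hb ha hAB hc'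
      exact ih b w B A' (by omega) hb hw hcw

lemma finite_order_of_zpow {x : G} {t : ℤ} (ht : t ≠ 0) (h : x ^ t = 1) :
    0 < orderOf x := by
  have h1 : x ^ (t.natAbs) = 1 := by
    rcases Int.natAbs_eq t with he | he
    · rw [← zpow_natCast, ← he, h]
    · have h2 : (x ^ ((t.natAbs : ℤ)))⁻¹ = x ^ t := by rw [← zpow_neg, ← he]
      rw [h] at h2
      rw [← zpow_natCast]
      exact inv_eq_one.mp h2
  exact (isOfFinOrder_iff_pow_eq_one.mpr
    ⟨t.natAbs, Int.natAbs_pos.mpr ht, h1⟩).orderOf_pos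

lemma comm_pow_right (a y : G) (hcy : Commute (a*y*a⁻¹*y⁻¹) y) (k : ℕ) :
    a * y^k * a⁻¹ * (y^k)⁻¹ = (a*y*a⁻¹*y⁻¹) ^ k := by
  have h1 : a * y^k * a⁻¹ = (a*y*a⁻¹)^k := by rw [conj_pow]
  have hab : a * y * a⁻¹ = (a*y*a⁻¹*y⁻¹) * y := by group
  rw [h1, hab, hcy.mul_pow]
  group

lemma comm_pow_left (x y : G) (hdx : Commute (x*y*x⁻¹*y⁻¹) x) (k : ℕ) :
    x^k * y * (x^k)⁻¹ * y⁻¹ = (x*y*x⁻¹*y⁻¹) ^ k := by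
  have h := conj_pow_left x y (x*y*x⁻¹*y⁻¹) (by group) hdx k
  rw [h]; group

lemma comm_sq (hD : IsDedekind G) (a b : G) : (a*b*a⁻¹*b⁻¹)^(2:ℕ) = 1 := by
  by_contra hne
  obtain ⟨t, s, hct, hcs, hct1, hcs1⟩ := ded_pair hD a b
  set c := a*b*a⁻¹*b⁻¹ with hcdef
  have hc1 : c ≠ 1 := by intro h; rw [h, one_pow] at hne; exact hne rfl
  have ht0 : t ≠ 0 := by intro h; rw [h, zpow_zero] at hct; exact hc1 hct
  have hcb : Commute c b := commute_of_eq_zpow t hct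
  have hfin : 0 < orderOf c := finite_order_of_zpow ht0 hct1
  set r := orderOf c with hr
  have h3r : 3 ≤ r := by
    rcases Nat.lt_or_ge r 3 with h | h
    · exfalso
      rcases (by omega : r = 1 ∨ r = 2) with h1 | h1
      · exact hc1 (orderOf_eq_one_iff.mp (hr.symm.trans h1))
      · apply hne
        have h2 := pow_orderOf_eq_one c
        rw [← hr, h1] at h2
        exact h2
    · exact h
  obtain ⟨p, j, hp, hpj, hq⟩ : ∃ p j, p.Prime ∧ ((Odd p ∧ j = 1) ∨ (p = 2 ∧ j = 2)) ∧ p^j ∣ r := by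
    by_cases hodd : ∃ P, P.Prime ∧ Odd P ∧ P ∣ r
    · obtain ⟨P, hP, hoddP, hdvd⟩ := hodd
      exact ⟨P, 1, hP, Or.inl ⟨hoddP, rfl⟩, by rwa [pow_one]⟩
    · push_neg at hodd
      have h2 : ∀ P, P.Prime → P ∣ r → P = 2 := by
        intro P hP hPd
        rcases hP.eq_two_or_odd' with h | h
        · exact h
        · exact absurd hPd (hodd P hP h)
      have h2r : 2 ∣ r := by
        obtain ⟨P, hP, hPd⟩ := Nat.exists_prime_and_dvd (by omega : r ≠ 1)
        rw [← h2 P hP hPd]; exact hPd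
      obtain ⟨r2, hr2⟩ := h2r
      obtain ⟨Q, hQ, hQd⟩ := Nat.exists_prime_and_dvd (by omega : r2 ≠ 1)
      have hQ2 : Q = 2 := h2 Q hQ (hQd.trans ⟨2, by omega⟩)
      rw [hQ2] at hQd
      obtain ⟨m, hm⟩ := hQd
      exact ⟨2, 2, Nat.prime_two, Or.inr ⟨rfl, rfl⟩, ⟨m, by omega⟩⟩
  set d : ℕ := r / p^j with hd
  have hq1 : 1 < p^j := Nat.one_lt_pow
    (by rcases hpj with ⟨_,h⟩|⟨_,h⟩ <;> omega) hp.one_lt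
  have hd0 : d ≠ 0 := by
    have := Nat.div_pos (Nat.le_of_dvd (by omega) hq) (by omega)
    omega
  have hγord : orderOf (c ^ d) = p ^ j := by
    rw [orderOf_pow' c hd0, ← hr, Nat.gcd_eq_right (Nat.div_dvd_of_dvd hq),
      Nat.div_div_self hq (by omega)]
  -- γ as a commutator of (a, b^d)
  have hγcomm : a * b^d * a⁻¹ * (b^d)⁻¹ = c ^ d := comm_pow_right a b hcb d
  have hγord1 : orderOf (a * b^d * a⁻¹ * (b^d)⁻¹) = p ^ j := by rw [hγcomm]; exact hγord
  -- reduce to p-elements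
  obtain ⟨t₀, s₀, hct₀, hcs₀, hct₀1, hcs₀1⟩ := ded_pair hD a (b^d)
  set γ := a * b^d * a⁻¹ * (b^d)⁻¹ with hγdef
  have hγ1 : γ ≠ 1 := by
    intro h; rw [h, orderOf_one] at hγord1; omega
  have ht₀0 : t₀ ≠ 0 := by intro h; rw [h, zpow_zero] at hct₀; exact hγ1 hct₀
  have hs₀0 : s₀ ≠ 0 := by intro h; rw [h, zpow_zero] at hcs₀; exact hγ1 hcs₀
  have hγq : γ ^ ((p^j : ℕ) : ℤ) = 1 := by
    rw [zpow_natCast, ← hγord1, pow_orderOf_eq_one]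
  have hbfin : 0 < orderOf (b^d) := by
    apply finite_order_of_zpow (t := t₀ * ((p^j:ℕ):ℤ))
      (mul_ne_zero ht₀0 (by exact_mod_cast (by omega : ¬ (p^j = 0))))
    rw [zpow_mul, ← hct₀, hγq]
  have hafin : 0 < orderOf a := by
    apply finite_order_of_zpow (t := s₀ * ((p^j:ℕ):ℤ))
      (mul_ne_zero hs₀0 (by exact_mod_cast (by omega : ¬ (p^j = 0))))
    rw [zpow_mul, ← hcs₀, hγq]
  -- b-side p-part
  set β := orderOf (b^d) with hβ
  set B := β.factorization p with hB
  set m := β / p^B with hm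
  have hβm : p^B * m = β := Nat.ordProj_mul_ordCompl_eq_self β p
  have hpm : ¬ p ∣ m := Nat.not_dvd_ordCompl hp (by omega)
  have hm0 : m ≠ 0 := by intro h; rw [h, mul_zero] at hβm; omega
  set b₁ := (b^d)^m with hb₁
  have hb₁ord : orderOf b₁ = p^B := by
    have h1 : orderOf b₁ = β / Nat.gcd β m := by
      rw [hb₁, orderOf_pow' _ hm0]
    have h2 : Nat.gcd β m = m := Nat.gcd_eq_right (show m ∣ β from Nat.ordCompl_dvd β p)
    rw [h1, h2]
    exact Nat.div_eq_of_eq_mul_left (Nat.pos_of_ne_zero hm0) hβm.symm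
  have hγcb : Commute γ (b^d) := commute_of_eq_zpow t₀ hct₀
  have hγ1comm : a * b₁ * a⁻¹ * b₁⁻¹ = γ ^ m := comm_pow_right a (b^d) hγcb m
  have hγ1ord : orderOf (a * b₁ * a⁻¹ * b₁⁻¹) = p ^ j := by
    rw [hγ1comm, orderOf_pow' _ hm0, hγord1,
      Nat.Coprime.gcd_eq_one (Nat.Coprime.pow_left j ((Nat.Prime.coprime_iff_not_dvd hp).mpr hpm)),
      Nat.div_one]
  -- a-side p-part
  obtain ⟨t₁, s₁, hct₁, hcs₁x, hct₁1, hcs₁1⟩ := ded_pair hD a b₁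
  set α := orderOf a with hα
  set A := α.factorization p with hA
  set n := α / p^A with hn
  have hαn : p^A * n = α := Nat.ordProj_mul_ordCompl_eq_self α p
  have hpn : ¬ p ∣ n := Nat.not_dvd_ordCompl hp (by omega)
  have hn0 : n ≠ 0 := by intro h; rw [h, mul_zero] at hαn; omega
  set a₁ := a^n with ha₁
  have ha₁ord : orderOf a₁ = p^A := by
    have h1 : orderOf a₁ = α / Nat.gcd α n := by
      rw [ha₁, orderOf_pow' _ hn0]
    have h2 : Nat.gcd α n = n := Nat.gcd_eq_right (show n ∣ α from Nat.ordCompl_dvd α p)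
    rw [h1, h2]
    exact Nat.div_eq_of_eq_mul_left (Nat.pos_of_ne_zero hn0) hαn.symm
  have hδa : Commute (a * b₁ * a⁻¹ * b₁⁻¹) a := commute_of_eq_zpow s₁ hcs₁x
  have hγ2comm : a₁ * b₁ * a₁⁻¹ * b₁⁻¹ = (a * b₁ * a⁻¹ * b₁⁻¹) ^ n :=
    comm_pow_left a b₁ hδa n
  have hγ2ord : orderOf (a₁ * b₁ * a₁⁻¹ * b₁⁻¹) = p ^ j := by
    rw [hγ2comm, orderOf_pow' _ hn0, hγ1ord,
      Nat.Coprime.gcd_eq_one (Nat.Coprime.pow_left j ((Nat.Prime.coprime_iff_not_dvd hp).mpr hpn)),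
      Nat.div_one]
  exact no_config hD p j hp hpj (A + B) a₁ b₁ A B le_rfl ha₁ord hb₁ord hγ2ord

lemma comm_central (hD : IsDedekind G) (a b w : G) :
    w * (a*b*a⁻¹*b⁻¹) * w⁻¹ = a*b*a⁻¹*b⁻¹ := by
  set c := a*b*a⁻¹*b⁻¹ with hcdef
  obtain ⟨z, hz⟩ := ded_conj hD w c
  by_cases hc1 : c = 1
  · rw [hc1]; group
  · have hsq : c^(2:ℕ) = 1 := comm_sq hD a b
    have h2 : c ^ (2:ℤ) = 1 := by exact_mod_cast hsq
    rcases Int.even_or_odd z with ⟨k, hk⟩ | ⟨k, hk⟩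
    · exfalso
      have hz2 : c ^ z = 1 := by
        rw [hk, ← two_mul, zpow_mul, h2, one_zpow]
      rw [hz2] at hz
      apply hc1
      have hcw : c = w⁻¹ * 1 * w := by rw [← hz]; group
      rw [hcw]; group
    · have hzc : c ^ z = c := by
        rw [hk, zpow_add, zpow_one, zpow_mul, h2, one_zpow, one_mul]
      rw [hzc] at hz
      exact hz

end JND

open JND

/-- A JND group does not embed into a direct product of Dedekind groups. -/
theorem jnd_not_embed_in_prod_dedekind {G : Type*} [Group G] (hG : IsJND G)
    {I : Type*} (H : I → Type*) [∀ i, Group (H i)] (hH : ∀ i, IsDedekind (H i))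
    (φ : G →* (∀ i, H i)) (hφ : Function.Injective φ) : False := by
  obtain ⟨hnotDed, hquot⟩ := hG
  -- commutators in G square to 1 and are central (transferred through φ)
  have hsq : ∀ u v : G, (u*v*u⁻¹*v⁻¹)^(2:ℕ) = 1 := by
    intro u v
    apply hφ
    rw [map_one, map_pow, map_mul, map_mul, map_mul, map_inv, map_inv]
    funext i
    have := comm_sq (hH i) (φ u i) (φ v i)
    simpa using this
  have hcent : ∀ u v w : G, w * (u*v*u⁻¹*v⁻¹) * w⁻¹ = u*v*u⁻¹*v⁻¹ := by
    intro u v w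
    apply hφ
    rw [map_mul, map_mul, map_mul, map_mul, map_mul, map_inv, map_inv, map_inv]
    funext i
    have := comm_central (hH i) (φ u i) (φ v i) (φ w i)
    simpa using this
  -- a witness of non-normality
  have hwit : ∃ x g : G, g * x * g⁻¹ ∉ Subgroup.zpowers x := by
    by_contra hall
    push_neg at hall
    apply hnotDed
    intro S
    constructor
    intro x hx g
    exact Subgroup.zpowers_le.mpr hx (hall x g)
  obtain ⟨x, g, hxg⟩ := hwit
  set c := g * x * g⁻¹ * x⁻¹ with hcdef
  have hc1 : c ≠ 1 := by
    intro h
    apply hxg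
    have h2 : g * x * g⁻¹ = x := mul_inv_eq_one.mp h
    rw [h2]
    exact Subgroup.mem_zpowers x
  have hcsq : c^(2:ℕ) = 1 := hsq g x
  have hccent : ∀ w : G, w * c * w⁻¹ = c := fun w => hcent g x w
  by_cases hx2 : x^(2:ℕ) = 1
  · -- case x² = 1 : use a central element of a kernel avoiding c
    have hφc : φ c ≠ 1 := fun h => hc1 (hφ (h.trans (map_one φ).symm))
    obtain ⟨i, hci⟩ := Function.ne_iff.mp hφc
    simp only [Pi.one_apply] at hci
    set ψ := (Pi.evalMonoidHom H i).comp φ with hψ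
    have hcK : c ∉ ψ.ker := by
      intro h
      rw [MonoidHom.mem_ker, hψ, MonoidHom.comp_apply] at h
      exact hci (by simpa using h)
    by_cases hKbot : ψ.ker = ⊥
    · -- G embeds in H i, so G is Dedekind: contradiction
      apply hnotDed
      intro S
      constructor
      intro y hy g'
      have hinj : Function.Injective ψ := (MonoidHom.ker_eq_bot_iff ψ).mp hKbot
      obtain ⟨n, hn⟩ := ded_conj (hH i) (ψ g') (ψ y)
      have : g' * y * g'⁻¹ = y ^ n := by
        apply hinj
        rw [map_mul, map_mul, map_inv, map_zpow, hn]
      rw [this]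
      exact Subgroup.zpowers_le.mpr hy (Subgroup.zpow_mem _ (Subgroup.mem_zpowers y) n)
    · -- the kernel is a nontrivial normal subgroup
      haveI hKnorm : ψ.ker.Normal := MonoidHom.normal_ker ψ
      obtain ⟨n₀, hn₀K, hn₀1⟩ : ∃ n₀ ∈ ψ.ker, n₀ ≠ 1 := by
        by_contra hno
        push_neg at hno
        exact hKbot ((Subgroup.eq_bot_iff_forall _).mpr hno)
      -- get a nontrivial central element z of the kernel
      obtain ⟨z, hzK, hz1, hzc⟩ :
          ∃ z ∈ ψ.ker, z ≠ 1 ∧ ∀ w : G, w * z * w⁻¹ = z := by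
        by_cases hcenn : ∀ w : G, w * n₀ * w⁻¹ = n₀
        · exact ⟨n₀, hn₀K, hn₀1, hcenn⟩
        · push_neg at hcenn
          obtain ⟨a₀, ha₀⟩ := hcenn
          refine ⟨a₀ * n₀ * a₀⁻¹ * n₀⁻¹, ?_, ?_, fun w => hcent a₀ n₀ w⟩
          · exact mul_mem (hKnorm.conj_mem n₀ hn₀K a₀) (inv_mem hn₀K)
          · intro h
            exact ha₀ (mul_inv_eq_one.mp h)
      set N := Subgroup.zpowers z with hN
      haveI hNnorm : N.Normal := by
        constructor
        intro y hy w
        obtain ⟨k, hk⟩ := Subgroup.mem_zpowers_iff.mp hy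
        have hzw : w * z ^ k * w⁻¹ = z ^ k := by
          rw [← conj_zpow, hzc w]
        rw [← hk, hzw]
        exact Subgroup.zpow_mem _ (Subgroup.mem_zpowers z) k
      have hNne : N ≠ ⊥ := by
        intro h
        apply hz1
        have : z ∈ N := Subgroup.mem_zpowers z
        rw [h] at this
        exact Subgroup.mem_bot.mp this
      have hNK : N ≤ ψ.ker := Subgroup.zpowers_le.mpr hzK
      have hQ : IsDedekind (G ⧸ N) := hquot N hNnorm hNne
      obtain ⟨n, hn⟩ := ded_conj hQ ((g : G ⧸ N)) ((x : G ⧸ N))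
      have hn' : ((g * x * g⁻¹ : G) : G ⧸ N) = ((x ^ n : G) : G ⧸ N) := by
        rw [QuotientGroup.mk_mul, QuotientGroup.mk_mul, QuotientGroup.mk_inv,
          QuotientGroup.mk_zpow]
        exact hn
      have hmem : (g * x * g⁻¹)⁻¹ * x ^ n ∈ N := QuotientGroup.eq.mp hn'
      obtain ⟨f, hf⟩ := Subgroup.mem_zpowers_iff.mp hmem
      -- g x g⁻¹ = x^n * z^(-f)
      have hgx : g * x * g⁻¹ = x ^ n * z ^ (-f) := by
        have h1 : g * x * g⁻¹ = x ^ n * (z ^ f)⁻¹ := by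
          rw [hf]
          group
        rw [h1, ← zpow_neg]
      rcases Int.even_or_odd n with ⟨k, hk⟩ | ⟨k, hk⟩
      · -- n even : x is central, contradiction
        have hxn : x ^ n = 1 := by
          have h2 : x ^ (2:ℤ) = 1 := by exact_mod_cast hx2
          rw [hk, ← two_mul, zpow_mul, h2, one_zpow]
        apply hxg
        have hzf : ∀ w : G, w * z ^ (-f) * w⁻¹ = z ^ (-f) := by
          intro w
          rw [← conj_zpow, hzc w]
        have hxz : x = z ^ (-f) := by
          have h3 : g * x * g⁻¹ = z ^ (-f) := by rw [hgx, hxn, one_mul]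
          calc x = g⁻¹ * (g * x * g⁻¹) * g := by group
            _ = g⁻¹ * z ^ (-f) * g := by rw [h3]
            _ = z ^ (-f) := by
                have := hzf g⁻¹
                group at this ⊢
                exact this
        have : g * x * g⁻¹ = x := by rw [hgx, hxn, one_mul, ← hxz]
        rw [this]
        exact Subgroup.mem_zpowers x
      · -- n odd : c = z^(-f) ∈ N ≤ ker, contradiction with c ∉ ker
        apply hcK
        apply hNK
        have hxn : x ^ n = x := by
          have h2 : x ^ (2:ℤ) = 1 := by exact_mod_cast hx2
          rw [hk, zpow_add, zpow_one, zpow_mul, h2, one_zpow, one_mul]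
        have hcz : c = x * z ^ (-f) * x⁻¹ := by
          rw [hcdef, hgx, hxn]
        have hzf : x * z ^ (-f) * x⁻¹ = z ^ (-f) := by
          rw [← conj_zpow, hzc x]
        rw [hcz, hzf]
        exact Subgroup.zpow_mem _ (Subgroup.mem_zpowers z) (-f)
  · -- case x² ≠ 1 : quotient by the central subgroup ⟨x²⟩
    have hx2c : ∀ w : G, w * x^(2:ℕ) * w⁻¹ = x^(2:ℕ) := by
      intro w
      have hd : w * x * w⁻¹ = (w*x*w⁻¹*x⁻¹) * x := by group
      have hdc : ∀ v : G, v * (w*x*w⁻¹*x⁻¹) = (w*x*w⁻¹*x⁻¹) * v := by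
        intro v
        have := hcent w x v
        calc v * (w*x*w⁻¹*x⁻¹) = (v * (w*x*w⁻¹*x⁻¹) * v⁻¹) * v := by group
          _ = (w*x*w⁻¹*x⁻¹) * v := by rw [this]
      have hsq' : (w*x*w⁻¹*x⁻¹)^(2:ℕ) = 1 := hsq w x
      calc w * x^(2:ℕ) * w⁻¹ = (w * x * w⁻¹) * (w * x * w⁻¹) := by rw [pow_two]; group
        _ = ((w*x*w⁻¹*x⁻¹) * x) * ((w*x*w⁻¹*x⁻¹) * x) := by rw [← hd]
        _ = (w*x*w⁻¹*x⁻¹) * ((x * (w*x*w⁻¹*x⁻¹)) * x) := by group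
        _ = (w*x*w⁻¹*x⁻¹) * (((w*x*w⁻¹*x⁻¹) * x) * x) := by rw [hdc x]
        _ = (w*x*w⁻¹*x⁻¹)^(2:ℕ) * x^(2:ℕ) := by rw [pow_two, pow_two]; group
        _ = x^(2:ℕ) := by rw [hsq', one_mul]
    set N := Subgroup.zpowers (x^(2:ℕ)) with hN
    haveI hNnorm : N.Normal := by
      constructor
      intro y hy w
      obtain ⟨k, hk⟩ := Subgroup.mem_zpowers_iff.mp hy
      have : w * (x^(2:ℕ)) ^ k * w⁻¹ = (x^(2:ℕ)) ^ k := by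
        rw [← conj_zpow, hx2c w]
      rw [← hk, this]
      exact Subgroup.zpow_mem _ (Subgroup.mem_zpowers _) k
    have hNne : N ≠ ⊥ := by
      intro h
      apply hx2
      have : x^(2:ℕ) ∈ N := Subgroup.mem_zpowers _
      rw [h] at this
      exact Subgroup.mem_bot.mp this
    have hQ : IsDedekind (G ⧸ N) := hquot N hNnorm hNne
    obtain ⟨n, hn⟩ := ded_conj hQ ((g : G ⧸ N)) ((x : G ⧸ N))
    have hn' : ((g * x * g⁻¹ : G) : G ⧸ N) = ((x ^ n : G) : G ⧸ N) := by
      rw [QuotientGroup.mk_mul, QuotientGroup.mk_mul, QuotientGroup.mk_inv,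
        QuotientGroup.mk_zpow]
      exact hn
    have hmem : (g * x * g⁻¹)⁻¹ * x ^ n ∈ N := QuotientGroup.eq.mp hn'
    obtain ⟨f, hf⟩ := Subgroup.mem_zpowers_iff.mp hmem
    apply hxg
    have hgx : g * x * g⁻¹ = x ^ n * ((x^(2:ℕ)) ^ f)⁻¹ := by
      rw [hf]
      group
    rw [hgx]
    exact mul_mem (Subgroup.zpow_mem _ (Subgroup.mem_zpowers x) n)
      (inv_mem (Subgroup.zpow_mem _ (Subgroup.pow_mem _ (Subgroup.mem_zpowers x) 2) f))
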